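/- Let G = ℝ² \ {(−1,0), (1,0)} (equivalently ℂ \ {−1,1}), let x = (0,√3) and let r ∈ (log(1+√3), log(29/10)). Then the j-metric ball B_j(x,r) is not a connected set. -/
import Mathlib

/-- The distance ratio metric (`j`-metric) of a domain `G`:
`j_G(x,y) = log (1 + |x-y| / min (d(x), d(y)))` where `d` is the distance to `∂G`. -/
noncomputable def jDist {E : Type*} [NormedAddCommGroup E] (G : Set E) (x y : E) : ℝ :=
  Real.log (1 + dist x y / min (Metric.infDist x (frontier G)) (Metric.infDist y (frontier G)))

/-- The `j`-metric ball `B_j(x,r) = {y ∈ G : j_G(x,y) < r}`. -/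
def jBall {E : Type*} [NormedAddCommGroup E] (G : Set E) (x : E) (r : ℝ) : Set E :=
  {y ∈ G | jDist G x y < r}

private lemma infDist_pair' {E : Type*} [MetricSpace E] (y a b : E) :
    Metric.infDist y ({a, b} : Set E) = min (dist y a) (dist y b) := by
  apply le_antisymm
  · exact le_min (Metric.infDist_le_dist_of_mem (by simp))
      (Metric.infDist_le_dist_of_mem (by simp))
  · by_contra h
    push_neg at h
    obtain ⟨z, hz, hzlt⟩ := (Metric.infDist_lt_iff ⟨a, by simp⟩).1 h
    simp only [Set.mem_insert_iff, Set.mem_singleton_iff] at hz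
    rcases hz with rfl | rfl
    · exact absurd hzlt (not_lt.2 (min_le_left _ _))
    · exact absurd hzlt (not_lt.2 (min_le_right _ _))

private lemma sqrt_key {A B : ℝ} (h : 361/100 * B ≤ A) :
    19/10 * Real.sqrt B ≤ Real.sqrt A := by
  have h1 : (19/10:ℝ) * Real.sqrt B = Real.sqrt ((19/10)^2 * B) := by
    rw [Real.sqrt_mul (by positivity), Real.sqrt_sq (by norm_num)]
  rw [h1]
  apply Real.sqrt_le_sqrt; nlinarith [Real.sqrt_nonneg B]

private lemma sq_le_four {X : ℝ} (hX : 0 ≤ X) (h : Real.sqrt X ≤ 2) : X ≤ 4 := by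
  nlinarith [Real.sq_sqrt hX, Real.sqrt_nonneg X]

private lemma four_lt_sq {X : ℝ} (h : 2 < Real.sqrt X) : 4 < X := by
  rcases le_or_gt 0 X with hX | hX
  · nlinarith [Real.sq_sqrt hX, Real.sqrt_nonneg X]
  · rw [Real.sqrt_eq_zero_of_nonpos hX.le] at h; norm_num at h

/-- On the separating curve `K`, the distance to `x` is at least `19/10` times
the relevant min of distances. -/
private lemma key_ineq (s a b m : ℝ) (hssq : s^2 = 3) (hs17 : 17/10 ≤ s)
    (hm2 : m ≤ 2) (hme : m ≤ Real.sqrt ((a - 1)^2 + (b - 0)^2))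
    (hmne : m ≤ Real.sqrt ((a - -1)^2 + (b - 0)^2))
    (hK : (b = -(3/5) ∧ |a| ≤ 2) ∨ (|a| = 2 ∧ b ≤ -(3/5))) :
    19/10 * m ≤ Real.sqrt ((0 - a)^2 + (s - b)^2) := by
  rcases hK with ⟨hb, ha⟩ | ⟨ha, hb⟩
  · subst hb
    rcases le_or_gt 0 a with ha0 | ha0
    · refine le_trans (mul_le_mul_of_nonneg_left hme (by norm_num)) ?_
      apply sqrt_key
      have ha2 : a ≤ 2 := le_of_abs_le ha
      nlinarith [mul_nonneg ha0 (by linarith : (0:ℝ) ≤ 2 - a)]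
    · refine le_trans (mul_le_mul_of_nonneg_left hmne (by norm_num)) ?_
      apply sqrt_key
      have ha2 : -2 ≤ a := neg_le_of_abs_le ha
      nlinarith [mul_nonneg (by linarith : (0:ℝ) ≤ -a) (by linarith : (0:ℝ) ≤ a + 2)]
  · rcases (abs_eq (by norm_num : (0:ℝ) ≤ 2)).1 ha with ha2 | ha2 <;> subst ha2
    · rcases le_or_gt (Real.sqrt (((2:ℝ) - 1)^2 + (b - 0)^2)) 2 with hc | hc
      · have hb3 : b^2 ≤ 3 := by
          have := sq_le_four (by positivity) hc; nlinarith
        refine le_trans (mul_le_mul_of_nonneg_left hme (by norm_num)) ?_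
        apply sqrt_key
        have hsb : 0 ≤ s + b := by
          by_contra h
          push_neg at h
          nlinarith [mul_pos (by linarith : (0:ℝ) < -(s+b)) (by linarith : (0:ℝ) < s - b)]
        nlinarith [mul_nonneg hsb (by linarith : (0:ℝ) ≤ -b)]
      · have hb3 : 3 < b^2 := by have := four_lt_sq hc; nlinarith
        have hbs : b ≤ -s := by
          by_contra h
          push_neg at h
          nlinarith [mul_pos (by linarith : (0:ℝ) < s + b) (by linarith : (0:ℝ) < s - b)]
        refine le_trans (by linarith : 19/10 * m ≤ 19/5) ?_
        rw [show (19/5:ℝ) = Real.sqrt ((19/5)^2) from (Real.sqrt_sq (by norm_num)).symm]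
        apply Real.sqrt_le_sqrt
        nlinarith [mul_nonneg (by linarith : (0:ℝ) ≤ -b - s) (by linarith : (0:ℝ) ≤ 3*s - b)]
    · rcases le_or_gt (Real.sqrt (((-2:ℝ) - -1)^2 + (b - 0)^2)) 2 with hc | hc
      · have hb3 : b^2 ≤ 3 := by
          have := sq_le_four (by positivity) hc; nlinarith
        refine le_trans (mul_le_mul_of_nonneg_left hmne (by norm_num)) ?_
        apply sqrt_key
        have hsb : 0 ≤ s + b := by
          by_contra h
          push_neg at h
          nlinarith [mul_pos (by linarith : (0:ℝ) < -(s+b)) (by linarith : (0:ℝ) < s - b)]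
        nlinarith [mul_nonneg hsb (by linarith : (0:ℝ) ≤ -b)]
      · have hb3 : 3 < b^2 := by have := four_lt_sq hc; nlinarith
        have hbs : b ≤ -s := by
          by_contra h
          push_neg at h
          nlinarith [mul_pos (by linarith : (0:ℝ) < s + b) (by linarith : (0:ℝ) < s - b)]
        refine le_trans (by linarith : 19/10 * m ≤ 19/5) ?_
        rw [show (19/5:ℝ) = Real.sqrt ((19/5)^2) from (Real.sqrt_sq (by norm_num)).symm]
        apply Real.sqrt_le_sqrt
        nlinarith [mul_nonneg (by linarith : (0:ℝ) ≤ -b - s) (by linarith : (0:ℝ) ≤ 3*s - b)]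

set_option maxHeartbeats 1000000 in
/-- Klén, Remark 2.5 (1): in `G = ℝ² \ {(-1,0), (1,0)}` with `x = (0,√3)` and
`r ∈ (log (1+√3), log (29/10))`, the `j`-metric ball `B_j(x,r)` is not connected. -/
theorem jBall_not_connected_twice_punctured_plane
    (e₀ e₁ x : EuclideanSpace ℝ (Fin 2)) (G : Set (EuclideanSpace ℝ (Fin 2)))
    (he₀ : e₀ = EuclideanSpace.single 0 1) (he₁ : e₁ = EuclideanSpace.single 1 1)
    (hG : G = ({-e₀, e₀} : Set (EuclideanSpace ℝ (Fin 2)))ᶜ)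
    (hx : x = Real.sqrt 3 • e₁)
    (r : ℝ) (hr : r ∈ Set.Ioo (Real.log (1 + Real.sqrt 3)) (Real.log (29 / 10))) :
    ¬ IsConnected (jBall G x r) := by
  obtain ⟨hr1, hr2⟩ := hr
  set s := Real.sqrt 3 with hsdef
  have hssq : s ^ 2 = 3 := Real.sq_sqrt (by norm_num)
  have hs17 : (17/10 : ℝ) ≤ s := by
    rw [hsdef, show (17/10:ℝ) = Real.sqrt ((17/10)^2) from (Real.sqrt_sq (by norm_num)).symm]
    exact Real.sqrt_le_sqrt (by norm_num)
  have hspos : (0:ℝ) < s := by linarith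
  -- coordinates
  have he00 : e₀ 0 = 1 := by rw [he₀]; simp [EuclideanSpace.single_apply]
  have he01 : e₀ 1 = 0 := by rw [he₀]; simp [EuclideanSpace.single_apply]
  have hne00 : (-e₀) 0 = -1 := by simp [he00]
  have hne01 : (-e₀) 1 = 0 := by simp [he01]
  have hx0 : x 0 = 0 := by rw [hx, he₁]; simp [EuclideanSpace.single_apply]
  have hx1 : x 1 = s := by rw [hx, he₁]; simp [EuclideanSpace.single_apply]
  have hnx0 : (-x) 0 = 0 := by simp [hx0]
  have hnx1 : (-x) 1 = -s := by simp [hx1]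
  -- distance formula
  have hdist : ∀ y z : EuclideanSpace ℝ (Fin 2),
      dist y z = Real.sqrt ((y 0 - z 0)^2 + (y 1 - z 1)^2) := by
    intro y z
    rw [EuclideanSpace.dist_eq, Fin.sum_univ_two]
    simp [Real.dist_eq, sq_abs]
  -- frontier
  have hFcl : IsClosed ({-e₀, e₀} : Set (EuclideanSpace ℝ (Fin 2))) :=
    ((Set.finite_singleton e₀).insert (-e₀)).isClosed
  haveI := Module.punctured_nhds_neBot ℝ (EuclideanSpace ℝ (Fin 2))
  have hFint : interior ({-e₀, e₀} : Set (EuclideanSpace ℝ (Fin 2))) = ∅ := by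
    rw [interior_eq_empty_iff_dense_compl,
      show ({-e₀, e₀} : Set (EuclideanSpace ℝ (Fin 2)))ᶜ = {-e₀}ᶜ ∩ {e₀}ᶜ by
        ext z; simp [not_or]]
    exact (dense_compl_singleton _).inter_of_isOpen_left (dense_compl_singleton _)
      isOpen_compl_singleton
  have hfront : frontier G = ({-e₀, e₀} : Set (EuclideanSpace ℝ (Fin 2))) := by
    rw [hG, frontier_compl, hFcl.frontier_eq, hFint, Set.diff_empty]
  -- infDist to frontier
  have hinf : ∀ y : EuclideanSpace ℝ (Fin 2),
      Metric.infDist y (frontier G) = min (dist y (-e₀)) (dist y e₀) := by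
    intro y; rw [hfront, infDist_pair']
  have hdxe : dist x e₀ = 2 := by
    rw [hdist, hx0, hx1, he00, he01]
    rw [show (0 - 1:ℝ)^2 + (s - 0)^2 = 4 by linear_combination hssq]
    rw [show (4:ℝ) = 2^2 by norm_num, Real.sqrt_sq (by norm_num)]
  have hdxne : dist x (-e₀) = 2 := by
    rw [hdist, hx0, hx1, hne00, hne01]
    rw [show (0 - (-1):ℝ)^2 + (s - 0)^2 = 4 by linear_combination hssq]
    rw [show (4:ℝ) = 2^2 by norm_num, Real.sqrt_sq (by norm_num)]
  have hinfx : Metric.infDist x (frontier G) = 2 := by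
    rw [hinf, hdxe, hdxne]; norm_num
  -- x and -x are in G
  have hxG : x ∈ G := by
    rw [hG]
    simp only [Set.mem_compl_iff, Set.mem_insert_iff, Set.mem_singleton_iff]
    push_neg
    constructor
    · intro h; have := congrArg (fun v : EuclideanSpace ℝ (Fin 2) => v 1) h
      simp only [hx1, hne01] at this; linarith
    · intro h; have := congrArg (fun v : EuclideanSpace ℝ (Fin 2) => v 1) h
      simp only [hx1, he01] at this; linarith
  have hnxG : -x ∈ G := by
    rw [hG]
    simp only [Set.mem_compl_iff, Set.mem_insert_iff, Set.mem_singleton_iff]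
    push_neg
    constructor
    · intro h; have := congrArg (fun v : EuclideanSpace ℝ (Fin 2) => v 1) h
      simp only [hnx1, hne01] at this; linarith
    · intro h; have := congrArg (fun v : EuclideanSpace ℝ (Fin 2) => v 1) h
      simp only [hnx1, he01] at this; linarith
  -- x ∈ ball
  have hrpos : 0 < r := lt_trans (Real.log_pos (by linarith)) hr1
  have hxball : x ∈ jBall G x r := by
    refine ⟨hxG, ?_⟩
    unfold jDist
    rw [dist_self, zero_div, add_zero, Real.log_one]
    exact hrpos
  -- -x ∈ ball
  have hnxball : -x ∈ jBall G x r := by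
    refine ⟨hnxG, ?_⟩
    unfold jDist
    have h1 : dist x (-x) = 2 * s := by
      rw [hdist, hx0, hx1, hnx0, hnx1]
      rw [show (0 - 0:ℝ)^2 + (s - -s)^2 = (2*s)^2 by ring]
      exact Real.sqrt_sq (by linarith)
    have h2 : dist (-x) e₀ = 2 := by
      rw [hdist, hnx0, hnx1, he00, he01]
      rw [show (0 - 1:ℝ)^2 + (-s - 0)^2 = 4 by linear_combination hssq]
      rw [show (4:ℝ) = 2^2 by norm_num, Real.sqrt_sq (by norm_num)]
    have h3 : dist (-x) (-e₀) = 2 := by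
      rw [hdist, hnx0, hnx1, hne00, hne01]
      rw [show (0 - (-1):ℝ)^2 + (-s - 0)^2 = 4 by linear_combination hssq]
      rw [show (4:ℝ) = 2^2 by norm_num, Real.sqrt_sq (by norm_num)]
    rw [hinfx, hinf, h1, h2, h3]
    rw [show min (2:ℝ) (min 2 2) = 2 by norm_num]
    rw [show (1 : ℝ) + 2 * s / 2 = 1 + s by ring]
    exact hr1
  -- key: points of the ball avoid the separating curve K
  have hball : ∀ y ∈ jBall G x r,
      ¬ ((y 1 = -(3/5) ∧ |y 0| ≤ 2) ∨ (|y 0| = 2 ∧ y 1 ≤ -(3/5))) := by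
    intro y hy hK
    obtain ⟨hyG, hylt⟩ := hy
    have hyne : y ≠ -e₀ ∧ y ≠ e₀ := by
      rw [hG] at hyG
      simp only [Set.mem_compl_iff, Set.mem_insert_iff, Set.mem_singleton_iff] at hyG
      push_neg at hyG; exact hyG
    have hm : Metric.infDist y (frontier G) = min (dist y (-e₀)) (dist y e₀) := hinf y
    have hmpos : 0 < min (Metric.infDist x (frontier G)) (Metric.infDist y (frontier G)) := by
      rw [hinfx, hm]
      exact lt_min (by norm_num) (lt_min (dist_pos.2 hyne.1) (dist_pos.2 hyne.2))
    set m := min (Metric.infDist x (frontier G)) (Metric.infDist y (frontier G)) with hmdef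
    -- from membership: dist x y < 19/10 * m
    have hlt : dist x y < 19/10 * m := by
      unfold jDist at hylt
      have h1 : (1 : ℝ) + dist x y / m < 29/10 := by
        have h0 : (0:ℝ) < 1 + dist x y / m := by positivity
        have h5 := lt_trans hylt hr2
        rwa [Real.log_lt_log_iff h0 (by norm_num)] at h5
      have h2 : dist x y / m < 19/10 := by linarith
      calc dist x y = dist x y / m * m := (div_mul_cancel₀ _ (ne_of_gt hmpos)).symm
        _ < 19/10 * m := mul_lt_mul_of_pos_right h2 hmpos
    -- but on K, dist x y ≥ 19/10 * m
    have hdye : dist y e₀ = Real.sqrt ((y 0 - 1)^2 + (y 1 - 0)^2) := by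
      rw [hdist, he00, he01]
    have hdyne : dist y (-e₀) = Real.sqrt ((y 0 - -1)^2 + (y 1 - 0)^2) := by
      rw [hdist, hne00, hne01]
    have hm2 : m ≤ 2 := by rw [hmdef, hinfx]; exact min_le_left _ _
    have hme : m ≤ Real.sqrt ((y 0 - 1)^2 + (y 1 - 0)^2) := by
      rw [← hdye]
      exact le_trans (min_le_right _ _) (by rw [hm]; exact min_le_right _ _)
    have hmne : m ≤ Real.sqrt ((y 0 - -1)^2 + (y 1 - 0)^2) := by
      rw [← hdyne]
      exact le_trans (min_le_right _ _) (by rw [hm]; exact min_le_left _ _)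
    have hge : 19/10 * m ≤ dist x y := by
      rw [hdist, hx0, hx1]
      exact key_ineq s (y 0) (y 1) m hssq hs17 hm2 hme hmne hK
    exact absurd hlt (not_lt.2 hge)
  -- the two open sets
  intro hconn
  set U : Set (EuclideanSpace ℝ (Fin 2)) := {y | y 1 < -(3/5) ∧ |y 0| < 2} with hUdef
  set V : Set (EuclideanSpace ℝ (Fin 2)) := {y | -(3/5) < y 1 ∨ 2 < |y 0|} with hVdef
  have hcont : ∀ i : Fin 2, Continuous fun y : EuclideanSpace ℝ (Fin 2) => y i := by
    intro i
    exact (EuclideanSpace.proj i).continuous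
  have hUopen : IsOpen U := by
    have h1 : IsOpen {y : EuclideanSpace ℝ (Fin 2) | y 1 < -(3/5)} :=
      isOpen_lt (hcont 1) continuous_const
    have h2 : IsOpen {y : EuclideanSpace ℝ (Fin 2) | |y 0| < 2} :=
      isOpen_lt ((hcont 0).abs) continuous_const
    exact h1.inter h2
  have hVopen : IsOpen V := by
    have h1 : IsOpen {y : EuclideanSpace ℝ (Fin 2) | -(3/5) < y 1} :=
      isOpen_lt continuous_const (hcont 1)
    have h2 : IsOpen {y : EuclideanSpace ℝ (Fin 2) | 2 < |y 0|} :=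
      isOpen_lt continuous_const ((hcont 0).abs)
    exact h1.union h2
  have hcover : jBall G x r ⊆ U ∪ V := by
    intro y hy
    by_contra hmem
    simp only [Set.mem_union, hUdef, hVdef, Set.mem_setOf_eq, not_or, not_and_or, not_lt] at hmem
    obtain ⟨hU', hV1, hV2⟩ := hmem
    refine hball y hy ?_
    rcases hU' with h1 | h2
    · left; exact ⟨le_antisymm hV1 h1, hV2⟩
    · right; exact ⟨le_antisymm hV2 h2, hV1⟩
  have hUmem : -x ∈ jBall G x r ∩ U := by
    refine ⟨hnxball, ?_, ?_⟩
    · rw [hnx1]; linarith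
    · rw [hnx0]; norm_num
  have hVmem : x ∈ jBall G x r ∩ V := by
    refine ⟨hxball, Or.inl ?_⟩
    rw [hx1]; linarith
  obtain ⟨z, _, ⟨hz1, hz2⟩, hz3⟩ :=
    hconn.2 U V hUopen hVopen hcover ⟨-x, hUmem⟩ ⟨x, hVmem⟩
  rcases hz3 with h | h
  · linarith
  · exact absurd hz2 (not_lt.2 (le_of_lt h))
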